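/- Let P be the cubic operator on ℝ² with positive coefficients αᵢⱼ, βᵢⱼ. If ξ₀ > 0 is a root of α₂₂ξ⁴ + (3α₂₁ − β₂₂)ξ³ + 3(α₁₂ − β₂₁)ξ² + (α₁₁ − 3β₁₂)ξ − β₁₁ = 0, then setting x₀ = (α₁₁ + 3α₁₂ξ₀ + 3α₂₁ξ₀² + α₂₂ξ₀³)^(−1/2), the point (x₀, ξ₀x₀) is a strictly positive fixed point of P. -/
import Mathlib

theorem stmt_11 (α11 α12 α21 α22 β11 β12 β21 β22 : ℝ)
    (hα11 : 0 < α11) (hα12 : 0 < α12) (hα21 : 0 < α21) (hα22 : 0 < α22)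
    (hβ11 : 0 < β11) (hβ12 : 0 < β12) (hβ21 : 0 < β21) (hβ22 : 0 < β22)
    (ξ₀ : ℝ) (hξ : 0 < ξ₀)
    (hroot : α22*ξ₀^4 + (3*α21 - β22)*ξ₀^3 + 3*(α12 - β21)*ξ₀^2
      + (α11 - 3*β12)*ξ₀ - β11 = 0)
    (x₀ : ℝ) (hx₀ : x₀ = 1 / Real.sqrt (α11 + 3*α12*ξ₀ + 3*α21*ξ₀^2 + α22*ξ₀^3)) :
    0 < x₀ ∧ 0 < ξ₀*x₀ ∧
    α11*x₀^3 + 3*α12*x₀^2*(ξ₀*x₀) + 3*α21*x₀*(ξ₀*x₀)^2 + α22*(ξ₀*x₀)^3 = x₀ ∧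
    β11*x₀^3 + 3*β12*x₀^2*(ξ₀*x₀) + 3*β21*x₀*(ξ₀*x₀)^2 + β22*(ξ₀*x₀)^3 = ξ₀*x₀ := by
  set A := α11 + 3*α12*ξ₀ + 3*α21*ξ₀^2 + α22*ξ₀^3 with hA
  have hApos : 0 < A := by positivity
  have hsq : Real.sqrt A > 0 := Real.sqrt_pos.mpr hApos
  have hxpos : 0 < x₀ := by rw [hx₀]; positivity
  have hx2 : x₀^2 = 1 / A := by
    rw [hx₀, div_pow, one_pow, Real.sq_sqrt hApos.le]
  have hAx : A * x₀^3 = x₀ := by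
    have : x₀^3 = x₀ * x₀^2 := by ring
    rw [this, hx2]; field_simp
  have hB : β11 + 3*β12*ξ₀ + 3*β21*ξ₀^2 + β22*ξ₀^3 = ξ₀ * A := by
    rw [hA]; nlinarith [hroot]
  refine ⟨hxpos, by positivity, ?_, ?_⟩
  · nlinarith [hAx]
  · have : (β11 + 3*β12*ξ₀ + 3*β21*ξ₀^2 + β22*ξ₀^3) * x₀^3 = ξ₀ * x₀ := by
      rw [hB]; nlinarith [hAx]
    nlinarith [this]
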